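/- Let t ≥ 4 be an integer and let H be a nonempty subgraph of H_t with d(H) = m(H_t) and, among all such subgraphs, with the minimum possible number of vertices. Then the minimum degree of H equals 2. -/

import Mathlib

abbrev GVert (r s : ℕ) := Unit ⊕ Fin s ⊕ Fin s × Fin r

def GRel (r s : ℕ) : GVert r s → GVert r s → Prop := fun a b =>
  match a, b with
  | Sum.inl _, Sum.inr (Sum.inr _) => True
  | Sum.inr (Sum.inl i), Sum.inr (Sum.inr p) => p.1 = i
  | _, _ => False

/-- The graph `G_r(u; u_1, …, u_s)`: `s` copies of `K_{2,r}`, where `{u_i, u_i'}` is the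
part of size 2 of the `i`-th copy, glued by identifying all `u_i'` to one vertex `u`.
Here `Sum.inl ()` is `u`, `Sum.inr (Sum.inl i)` is `u_i`, and `Sum.inr (Sum.inr (i, j))`
is the `j`-th vertex of the part of size `r` in the `i`-th copy. -/
def GStar (r s : ℕ) : SimpleGraph (GVert r s) := SimpleGraph.fromRel (GRel r s)

def htr (t : ℕ) : ℕ := (t - 1) / 2
def hts (t : ℕ) : ℕ := t - 1 - htr t

abbrev HtV (t : ℕ) :=
  GVert (t - 1) (htr t) ⊕ GVert (hts t - 1) (hts t) ⊕ GVert (htr t - 1) (t - 2)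

/-- For `r = ⌊(t-1)/2⌋`, `s = t - 1 - r`: the disjoint union of `G_{t-1}(u; u_1, …, u_r)`,
`G_{s-1}(v; v_1, …, v_s)` and `G_{r-1}(w; w_1, …, w_{t-2})`, joining `u` to
`v, v_1, …, v_s` and `v` to `w, w_1, …, w_{t-2}`. -/
def HtRel (t : ℕ) : HtV t → HtV t → Prop := fun a b =>
  match a, b with
  | Sum.inl x, Sum.inl y => GRel _ _ x y
  | Sum.inr (Sum.inl x), Sum.inr (Sum.inl y) => GRel _ _ x y
  | Sum.inr (Sum.inr x), Sum.inr (Sum.inr y) => GRel _ _ x y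
  | Sum.inl (Sum.inl _), Sum.inr (Sum.inl (Sum.inl _)) => True
  | Sum.inl (Sum.inl _), Sum.inr (Sum.inl (Sum.inr (Sum.inl _))) => True
  | Sum.inr (Sum.inl (Sum.inl _)), Sum.inr (Sum.inr (Sum.inl _)) => True
  | Sum.inr (Sum.inl (Sum.inl _)), Sum.inr (Sum.inr (Sum.inr (Sum.inl _))) => True
  | _, _ => False

/-- The graph `H_t`. -/
def Ht (t : ℕ) : SimpleGraph (HtV t) := SimpleGraph.fromRel (HtRel t)

/-- The density `|E(H)|/|V(H)|` of a subgraph `H`. -/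
noncomputable def subDensity {V : Type*} {G : SimpleGraph V} (H : G.Subgraph) : ℚ :=
  (H.edgeSet.ncard : ℚ) / (H.verts.ncard : ℚ)

/-- Removing one vertex removes exactly `deg v` edges. -/
lemma edge_split {V : Type*} [Fintype V] {G : SimpleGraph V} (H : G.Subgraph) (v : V) :
    ((H.deleteVerts {v}).edgeSet).ncard + (H.neighborSet v).ncard = H.edgeSet.ncard := by
  classical
  set Ev : Set (Sym2 V) := {e ∈ H.edgeSet | v ∈ e} with hEv
  have h1 : (H.deleteVerts {v}).edgeSet = H.edgeSet \ Ev := by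
    ext e
    induction e using Sym2.ind with
    | _ a b =>
      simp only [SimpleGraph.Subgraph.mem_edgeSet, Set.mem_diff, hEv, Set.mem_setOf_eq,
        Sym2.mem_iff, SimpleGraph.Subgraph.deleteVerts_adj, Set.mem_singleton_iff]
      constructor
      · rintro ⟨_, ha, _, hb, hadj⟩
        exact ⟨hadj, fun h => h.2.elim (fun h' => ha h'.symm) (fun h' => hb h'.symm)⟩
      · rintro ⟨hadj, hn⟩
        push_neg at hn
        obtain ⟨h1, h2⟩ := hn hadj
        exact ⟨hadj.fst_mem, fun h => (h1 h.symm).elim, hadj.snd_mem,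
          fun h => (h2 h.symm).elim, hadj⟩
  have h2 : Ev = (fun w => s(v, w)) '' (H.neighborSet v) := by
    ext e
    induction e using Sym2.ind with
    | _ a b =>
      simp only [hEv, Set.mem_setOf_eq, SimpleGraph.Subgraph.mem_edgeSet, Sym2.mem_iff,
        Set.mem_image, SimpleGraph.Subgraph.mem_neighborSet]
      constructor
      · rintro ⟨hadj, (rfl | rfl)⟩
        · exact ⟨b, hadj, rfl⟩
        · exact ⟨a, hadj.symm, Sym2.eq_swap⟩
      · rintro ⟨w, hw, he⟩
        rw [Sym2.eq_iff] at he
        rcases he with ⟨rfl, rfl⟩ | ⟨rfl, rfl⟩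
        · exact ⟨hw, Or.inl rfl⟩
        · exact ⟨hw.symm, Or.inr rfl⟩
  have h3 : Ev.ncard = (H.neighborSet v).ncard := by
    rw [h2]
    exact Set.ncard_image_of_injective _ (fun a b h => (Sym2.congr_right).mp h)
  rw [h1, ← h3]
  exact Set.ncard_diff_add_ncard_of_subset (fun e he => he.1) (Set.toFinite _)

lemma edgeSet_eq_of_adj_iff {V : Type*} {G : SimpleGraph V} (K : G.Subgraph)
    (S : Set (Sym2 V)) (h : ∀ x y, K.Adj x y ↔ s(x, y) ∈ S) : K.edgeSet = S := by
  ext e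
  induction e using Sym2.ind with
  | _ a b => rw [SimpleGraph.Subgraph.mem_edgeSet, h]

lemma density_one_of_c4 {V : Type*} {G : SimpleGraph V}
    (A B C D : V) (hAB : A ≠ B) (hAC : A ≠ C) (hAD : A ≠ D) (hBC : B ≠ C) (hBD : B ≠ D)
    (hCD : C ≠ D)
    (h1 : G.Adj A C) (h2 : G.Adj A D) (h3 : G.Adj B C) (h4 : G.Adj B D) :
    ∃ H0 : G.Subgraph, H0.verts.Nonempty ∧ subDensity H0 = 1 := by
  classical
  have hS4 : ({s(A,C), s(A,D), s(B,C), s(B,D)} : Set (Sym2 V)).ncard = 4 := by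
    rw [Set.ncard_insert_of_notMem (by simp [Sym2.eq_iff, hAB, hAC, hAD, hBC, hBD, hCD,
        hAB.symm, hAC.symm, hAD.symm, hBC.symm, hBD.symm, hCD.symm]),
      Set.ncard_insert_of_notMem (by simp [Sym2.eq_iff, hAB, hAC, hAD, hBC, hBD, hCD,
        hAB.symm, hAC.symm, hAD.symm, hBC.symm, hBD.symm, hCD.symm]),
      Set.ncard_insert_of_notMem (by simp [Sym2.eq_iff, hAB, hAC, hAD, hBC, hBD, hCD,
        hAB.symm, hAC.symm, hAD.symm, hBC.symm, hBD.symm, hCD.symm]),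
      Set.ncard_singleton]
  refine ⟨⟨{A, B, C, D},
    fun x y => s(x,y) ∈ ({s(A,C), s(A,D), s(B,C), s(B,D)} : Set (Sym2 V)),
    ?_, ?_, ?_⟩, ⟨A, by simp⟩, ?_⟩
  · intro x y h <;> simp only [Set.mem_insert_iff, Set.mem_singleton_iff] at h <;>
            rcases h with h|h|h|h <;> rw [Sym2.eq_iff] at h <;>
      rcases h with ⟨rfl, rfl⟩ | ⟨rfl, rfl⟩ <;> solve_by_elim [SimpleGraph.Adj.symm]
  · intro x y h <;> simp only [Set.mem_insert_iff, Set.mem_singleton_iff] at h <;>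
            rcases h with h|h|h|h <;> rw [Sym2.eq_iff] at h <;>
      rcases h with ⟨rfl, rfl⟩ | ⟨rfl, rfl⟩ <;> simp
  · constructor; intro x y h
    simpa [Sym2.eq_swap (a := y) (b := x)] using h
  · have hE := edgeSet_eq_of_adj_iff (G := G)
      ⟨{A, B, C, D},
        fun x y => s(x,y) ∈ ({s(A,C), s(A,D), s(B,C), s(B,D)} : Set (Sym2 V)),
        by intro x y h <;> simp only [Set.mem_insert_iff, Set.mem_singleton_iff] at h <;>
            rcases h with h|h|h|h <;> rw [Sym2.eq_iff] at h <;>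
            rcases h with ⟨rfl, rfl⟩ | ⟨rfl, rfl⟩ <;> solve_by_elim [SimpleGraph.Adj.symm],
        by intro x y h <;> simp only [Set.mem_insert_iff, Set.mem_singleton_iff] at h <;>
            rcases h with h|h|h|h <;> rw [Sym2.eq_iff] at h <;>
            rcases h with ⟨rfl, rfl⟩ | ⟨rfl, rfl⟩ <;> simp,
        by constructor; intro x y h; simpa [Sym2.eq_swap (a := y) (b := x)] using h⟩
      ({s(A,C), s(A,D), s(B,C), s(B,D)} : Set (Sym2 V)) (fun x y => Iff.rfl)
    have hv : ({A, B, C, D} : Set V).ncard = 4 := by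
      rw [Set.ncard_insert_of_notMem (by simp [hAB, hAC, hAD]),
        Set.ncard_insert_of_notMem (by simp [hBC, hBD]),
        Set.ncard_insert_of_notMem (by simp [hCD]), Set.ncard_singleton]
    show ((_ : Set (Sym2 V)).ncard : ℚ) / _ = 1
    dsimp only
    rw [hE, hS4, hv]
    norm_num


variable {t : ℕ} {y : HtV t}

lemma nbr_side1 {i : Fin (htr t)} {j : Fin (t-1)}
    (h : (Ht t).Adj (Sum.inl (Sum.inr (Sum.inr (i, j)))) y) :
    y = Sum.inl (Sum.inl ()) ∨ y = Sum.inl (Sum.inr (Sum.inl i)) := by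
  rw [Ht, SimpleGraph.fromRel_adj] at h
  obtain ⟨hne, h | h⟩ := h <;>
    rcases y with (⟨⟩|_|⟨a,b⟩)|(⟨⟩|_|⟨a,b⟩)|(⟨⟩|_|⟨a,b⟩) <;>
    simp_all [HtRel, GRel]

lemma nbr_side2 {i : Fin (hts t)} {j : Fin (hts t - 1)}
    (h : (Ht t).Adj (Sum.inr (Sum.inl (Sum.inr (Sum.inr (i, j))))) y) :
    y = Sum.inr (Sum.inl (Sum.inl ())) ∨ y = Sum.inr (Sum.inl (Sum.inr (Sum.inl i))) := by
  rw [Ht, SimpleGraph.fromRel_adj] at h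
  obtain ⟨hne, h | h⟩ := h <;>
    rcases y with (⟨⟩|_|⟨a,b⟩)|(⟨⟩|_|⟨a,b⟩)|(⟨⟩|_|⟨a,b⟩) <;>
    simp_all [HtRel, GRel]

lemma nbr_side3 {i : Fin (t-2)} {j : Fin (htr t - 1)}
    (h : (Ht t).Adj (Sum.inr (Sum.inr (Sum.inr (Sum.inr (i, j))))) y) :
    y = Sum.inr (Sum.inr (Sum.inl ())) ∨ y = Sum.inr (Sum.inr (Sum.inr (Sum.inl i))) := by
  rw [Ht, SimpleGraph.fromRel_adj] at h
  obtain ⟨hne, h | h⟩ := h <;>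
    rcases y with (⟨⟩|_|⟨a,b⟩)|(⟨⟩|_|⟨a,b⟩)|(⟨⟩|_|⟨a,b⟩) <;>
    simp_all [HtRel, GRel]

lemma nbr_ui {i : Fin (htr t)} (h : (Ht t).Adj (Sum.inl (Sum.inr (Sum.inl i))) y) :
    ∃ a b, y = Sum.inl (Sum.inr (Sum.inr (a, b))) := by
  rw [Ht, SimpleGraph.fromRel_adj] at h
  obtain ⟨hne, h | h⟩ := h <;>
    rcases y with (⟨⟩|_|⟨a,b⟩)|(⟨⟩|_|⟨a,b⟩)|(⟨⟩|_|⟨a,b⟩) <;>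
    simp_all [HtRel, GRel] <;> exact ⟨a, b, rfl⟩

lemma nbr_vi {i : Fin (hts t)} (h : (Ht t).Adj (Sum.inr (Sum.inl (Sum.inr (Sum.inl i)))) y) :
    (∃ a b, y = Sum.inr (Sum.inl (Sum.inr (Sum.inr (a, b))))) ∨
      y = Sum.inl (Sum.inl ()) := by
  rw [Ht, SimpleGraph.fromRel_adj] at h
  obtain ⟨hne, h | h⟩ := h <;>
    rcases y with (⟨⟩|_|⟨a,b⟩)|(⟨⟩|_|⟨a,b⟩)|(⟨⟩|_|⟨a,b⟩) <;>
    simp_all [HtRel, GRel] <;> exact Or.inl ⟨a, b, rfl⟩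

lemma nbr_wi {i : Fin (t-2)} (h : (Ht t).Adj (Sum.inr (Sum.inr (Sum.inr (Sum.inl i)))) y) :
    (∃ a b, y = Sum.inr (Sum.inr (Sum.inr (Sum.inr (a, b))))) ∨
      y = Sum.inr (Sum.inl (Sum.inl ())) := by
  rw [Ht, SimpleGraph.fromRel_adj] at h
  obtain ⟨hne, h | h⟩ := h <;>
    rcases y with (⟨⟩|_|⟨a,b⟩)|(⟨⟩|_|⟨a,b⟩)|(⟨⟩|_|⟨a,b⟩) <;>
    simp_all [HtRel, GRel] <;> exact Or.inl ⟨a, b, rfl⟩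

lemma nbr_u (h : (Ht t).Adj (Sum.inl (Sum.inl ())) y) :
    (∃ a b, y = Sum.inl (Sum.inr (Sum.inr (a, b)))) ∨
      y = Sum.inr (Sum.inl (Sum.inl ())) ∨
      (∃ i, y = Sum.inr (Sum.inl (Sum.inr (Sum.inl i)))) := by
  rw [Ht, SimpleGraph.fromRel_adj] at h
  obtain ⟨hne, h | h⟩ := h <;>
    rcases y with (⟨⟩|_|⟨a,b⟩)|(⟨⟩|c|⟨a,b⟩)|(⟨⟩|_|⟨a,b⟩) <;>
    simp_all [HtRel, GRel] <;>
    first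
      | exact Or.inl ⟨a, b, rfl⟩
      | (rcases c with c | c
         · exact Or.inr (Or.inr ⟨c, rfl⟩)
         · simp [GRel] at h)

lemma nbr_v (h : (Ht t).Adj (Sum.inr (Sum.inl (Sum.inl ()))) y) :
    y = Sum.inl (Sum.inl ()) ∨
      (∃ a b, y = Sum.inr (Sum.inl (Sum.inr (Sum.inr (a, b))))) ∨
      y = Sum.inr (Sum.inr (Sum.inl ())) ∨
      (∃ i, y = Sum.inr (Sum.inr (Sum.inr (Sum.inl i)))) := by
  rw [Ht, SimpleGraph.fromRel_adj] at h
  obtain ⟨hne, h | h⟩ := h <;>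
    rcases y with (⟨⟩|_|⟨a,b⟩)|(⟨⟩|_|⟨a,b⟩)|(⟨⟩|c|⟨a,b⟩) <;>
    simp_all [HtRel, GRel] <;>
    first
      | exact Or.inr (Or.inl ⟨a, b, rfl⟩)
      | (rcases c with c | c
         · exact Or.inr (Or.inr (Or.inr ⟨c, rfl⟩))
         · simp [GRel] at h)

lemma nbr_w (h : (Ht t).Adj (Sum.inr (Sum.inr (Sum.inl ()))) y) :
    y = Sum.inr (Sum.inl (Sum.inl ())) ∨
      (∃ a b, y = Sum.inr (Sum.inr (Sum.inr (Sum.inr (a, b))))) := by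
  rw [Ht, SimpleGraph.fromRel_adj] at h
  obtain ⟨hne, h | h⟩ := h <;>
    rcases y with (⟨⟩|_|⟨a,b⟩)|(⟨⟩|_|⟨a,b⟩)|(⟨⟩|_|⟨a,b⟩) <;>
    simp_all [HtRel, GRel] <;> exact Or.inr ⟨a, b, rfl⟩


theorem stmt_6 (t : ℕ) (ht : 4 ≤ t) (H : (Ht t).Subgraph) (hne : H.verts.Nonempty)
    (hmax : ∀ H' : (Ht t).Subgraph, H'.verts.Nonempty → subDensity H' ≤ subDensity H)
    (hmin : ∀ H' : (Ht t).Subgraph, H'.verts.Nonempty →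
      (∀ H'' : (Ht t).Subgraph, H''.verts.Nonempty → subDensity H'' ≤ subDensity H') →
      H.verts.ncard ≤ H'.verts.ncard) :
    (∀ v ∈ H.verts, 2 ≤ (H.neighborSet v).ncard) ∧
    (∃ v ∈ H.verts, (H.neighborSet v).ncard = 2) := by
  classical
  have hr : 0 < htr t := by unfold htr; omega
  have ht1 : 1 < t - 1 := by omega
  obtain ⟨H0, hH0ne, hH0d⟩ := density_one_of_c4 (G := Ht t)
    (Sum.inl (Sum.inl ()))
    (Sum.inl (Sum.inr (Sum.inl ⟨0, hr⟩)))
    (Sum.inl (Sum.inr (Sum.inr (⟨0, hr⟩, ⟨0, by omega⟩))))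
    (Sum.inl (Sum.inr (Sum.inr (⟨0, hr⟩, ⟨1, ht1⟩))))
    (by simp) (by simp) (by simp) (by simp) (by simp) (by simp [Fin.ext_iff])
    (by rw [Ht, SimpleGraph.fromRel_adj]
        exact ⟨by simp, Or.inl (by simp [HtRel, GRel])⟩)
    (by rw [Ht, SimpleGraph.fromRel_adj]
        exact ⟨by simp, Or.inl (by simp [HtRel, GRel])⟩)
    (by rw [Ht, SimpleGraph.fromRel_adj]
        exact ⟨by simp, Or.inl (by simp [HtRel, GRel])⟩)
    (by rw [Ht, SimpleGraph.fromRel_adj]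
        exact ⟨by simp, Or.inl (by simp [HtRel, GRel])⟩)
  have hd1 : (1 : ℚ) ≤ subDensity H := hH0d ▸ hmax H0 hH0ne
  have hn0 : 0 < H.verts.ncard := (Set.ncard_pos (Set.toFinite _)).mpr hne
  have hen : H.verts.ncard ≤ H.edgeSet.ncard := by
    by_contra hcon
    push_neg at hcon
    have h1 : (H.edgeSet.ncard : ℚ) / (H.verts.ncard : ℚ) < 1 := by
      rw [div_lt_one (by exact_mod_cast hn0)]
      exact_mod_cast hcon
    rw [subDensity] at hd1
    linarith
  -- Part 1 : minimum degree at least 2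
  have deg2 : ∀ v ∈ H.verts, 2 ≤ (H.neighborSet v).ncard := by
    intro v hv
    by_contra hdeg
    push_neg at hdeg
    have hd1' : (H.neighborSet v).ncard ≤ 1 := by omega
    have hn2 : 2 ≤ H.verts.ncard := by
      rcases Nat.lt_or_ge H.verts.ncard 2 with h | h
      · exfalso
        have h1 : H.verts.ncard = 1 := by omega
        obtain ⟨a, ha⟩ := Set.ncard_eq_one.mp h1
        have he0 : H.edgeSet = ∅ := by
          ext e
          induction e using Sym2.ind with
          | _ x y =>
            simp only [SimpleGraph.Subgraph.mem_edgeSet, Set.mem_empty_iff_false, iff_false]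
            intro hadj
            have hx := hadj.fst_mem
            have hy := hadj.snd_mem
            rw [ha] at hx hy
            exact hadj.ne (hx.trans hy.symm)
        rw [he0] at hen
        simp at hen
        omega
      · exact h
    set H' := H.deleteVerts {v} with hH'
    have hv' : H'.verts = H.verts \ {v} := rfl
    have hvc : H'.verts.ncard = H.verts.ncard - 1 := by
      rw [hv', Set.ncard_diff_singleton_of_mem hv]
    have hne' : H'.verts.Nonempty := by
      apply Set.nonempty_of_ncard_ne_zero
      omega
    have hec : H'.edgeSet.ncard + (H.neighborSet v).ncard = H.edgeSet.ncard :=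
      edge_split H v
    have hge : subDensity H ≤ subDensity H' := by
      rw [subDensity, subDensity, hvc]
      rw [div_le_div_iff₀ (by exact_mod_cast hn0) (by
        have h2 : 0 < H.verts.ncard - 1 := by omega
        exact_mod_cast h2)]
      have e1 : (H'.edgeSet.ncard : ℚ)
          = (H.edgeSet.ncard : ℚ) - (H.neighborSet v).ncard := by
        rw [← hec]; push_cast; ring
      have e2 : ((H.verts.ncard - 1 : ℕ) : ℚ) = (H.verts.ncard : ℚ) - 1 := by
        have h3 : 1 ≤ H.verts.ncard := by omega
        push_cast [h3]
        ring
      rw [e1, e2]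
      have hd : ((H.neighborSet v).ncard : ℚ) ≤ 1 := by exact_mod_cast hd1'
      have hne2 : (H.verts.ncard : ℚ) ≤ (H.edgeSet.ncard : ℚ) := by exact_mod_cast hen
      nlinarith
    have hmax' : ∀ H'' : (Ht t).Subgraph, H''.verts.Nonempty →
        subDensity H'' ≤ subDensity H' :=
      fun H'' h'' => le_trans (hmax H'' h'') hge
    have := hmin H' hne' hmax'
    omega
  refine ⟨deg2, ?_⟩
  -- Part 2 : some vertex has degree exactly 2
  by_contra hno
  push_neg at hno
  have hdeg3 : ∀ v ∈ H.verts, 3 ≤ (H.neighborSet v).ncard := by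
    intro v hv
    have h2 := deg2 v hv
    have hn2 := hno v hv
    omega
  have key : ∀ (x a b : HtV t), (∀ y, H.Adj x y → y = a ∨ y = b) → x ∉ H.verts := by
    intro x a b hsub hx
    have h3 := hdeg3 x hx
    have hsub' : H.neighborSet x ⊆ {a, b} := fun y hy => hsub y hy
    have hle := Set.ncard_le_ncard hsub' (Set.toFinite _)
    have h2 : ({a, b} : Set (HtV t)).ncard ≤ 2 := by
      refine le_trans (Set.ncard_insert_le a {b}) ?_
      simp
    omega
  have hside1 : ∀ (i : Fin (htr t)) (j : Fin (t-1)),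
      Sum.inl (Sum.inr (Sum.inr (i, j))) ∉ H.verts :=
    fun i j => key _ _ _ (fun y hy => nbr_side1 hy.adj_sub)
  have hside2 : ∀ (i : Fin (hts t)) (j : Fin (hts t - 1)),
      Sum.inr (Sum.inl (Sum.inr (Sum.inr (i, j)))) ∉ H.verts :=
    fun i j => key _ _ _ (fun y hy => nbr_side2 hy.adj_sub)
  have hside3 : ∀ (i : Fin (t-2)) (j : Fin (htr t - 1)),
      Sum.inr (Sum.inr (Sum.inr (Sum.inr (i, j)))) ∉ H.verts :=
    fun i j => key _ _ _ (fun y hy => nbr_side3 hy.adj_sub)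
  have hui : ∀ i : Fin (htr t), Sum.inl (Sum.inr (Sum.inl i)) ∉ H.verts := by
    intro i
    apply key _ (Sum.inl (Sum.inl ())) (Sum.inl (Sum.inl ()))
    intro y hy
    obtain ⟨a, b, rfl⟩ := nbr_ui hy.adj_sub
    exact ((hside1 a b) hy.snd_mem).elim
  have hvi : ∀ i : Fin (hts t), Sum.inr (Sum.inl (Sum.inr (Sum.inl i))) ∉ H.verts := by
    intro i
    apply key _ (Sum.inl (Sum.inl ())) (Sum.inl (Sum.inl ()))
    intro y hy
    rcases nbr_vi hy.adj_sub with ⟨a, b, rfl⟩ | rfl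
    · exact ((hside2 a b) hy.snd_mem).elim
    · exact Or.inl rfl
  have hwi : ∀ i : Fin (t-2), Sum.inr (Sum.inr (Sum.inr (Sum.inl i))) ∉ H.verts := by
    intro i
    apply key _ (Sum.inr (Sum.inl (Sum.inl ()))) (Sum.inr (Sum.inl (Sum.inl ())))
    intro y hy
    rcases nbr_wi hy.adj_sub with ⟨a, b, rfl⟩ | rfl
    · exact ((hside3 a b) hy.snd_mem).elim
    · exact Or.inl rfl
  have hu : (Sum.inl (Sum.inl ()) : HtV t) ∉ H.verts := by
    apply key _ (Sum.inr (Sum.inl (Sum.inl ()))) (Sum.inr (Sum.inl (Sum.inl ())))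
    intro y hy
    rcases nbr_u hy.adj_sub with ⟨a, b, rfl⟩ | rfl | ⟨i, rfl⟩
    · exact ((hside1 a b) hy.snd_mem).elim
    · exact Or.inl rfl
    · exact ((hvi i) hy.snd_mem).elim
  have hv : (Sum.inr (Sum.inl (Sum.inl ())) : HtV t) ∉ H.verts := by
    apply key _ (Sum.inr (Sum.inr (Sum.inl ()))) (Sum.inr (Sum.inr (Sum.inl ())))
    intro y hy
    rcases nbr_v hy.adj_sub with rfl | ⟨a, b, rfl⟩ | rfl | ⟨i, rfl⟩
    · exact (hu hy.snd_mem).elim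
    · exact ((hside2 a b) hy.snd_mem).elim
    · exact Or.inl rfl
    · exact ((hwi i) hy.snd_mem).elim
  have hw : (Sum.inr (Sum.inr (Sum.inl ())) : HtV t) ∉ H.verts := by
    apply key _ (Sum.inl (Sum.inl ())) (Sum.inl (Sum.inl ()))
    intro y hy
    rcases nbr_w hy.adj_sub with rfl | ⟨a, b, rfl⟩
    · exact (hv hy.snd_mem).elim
    · exact ((hside3 a b) hy.snd_mem).elim
  obtain ⟨x, hx⟩ := hne
  rcases x with (⟨⟩|i|⟨a,b⟩)|(⟨⟩|i|⟨a,b⟩)|(⟨⟩|i|⟨a,b⟩)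
  · exact hu hx
  · exact hui i hx
  · exact hside1 a b hx
  · exact hv hx
  · exact hvi i hx
  · exact hside2 a b hx
  · exact hw hx
  · exact hwi i hx
  · exact hside3 a b hx
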